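/- Let f : [0,∞) → [0,∞) be increasing and convex, and suppose a classical channel (Markov kernel) Φ from a measurable space to probability distributions satisfies H(Φ(p)) ≥ f(H(p)) for all input distributions p, where H denotes Shannon entropy. Then for every n and every joint input distribution p on n copies, the n-fold product channel satisfies H(Φ^{⊗n}(p)) ≥ n·f(H(p)/n). -/

import Mathlib

open Real Set Filter

private lemma neg_sum_mul_log_eq {γ : Type} [Fintype γ] (p : γ → ℝ) :
    -∑ x, p x * Real.log (p x) = ∑ x, Real.negMulLog (p x) := by
  rw [← Finset.sum_neg_distrib]
  exact Finset.sum_congr rfl fun x _ => by rw [Real.negMulLog, neg_mul]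

private lemma entropy_nonneg' {γ : Type} [Fintype γ] (p : γ → ℝ) (h0 : ∀ x, 0 ≤ p x)
    (h1 : ∑ x, p x = 1) : 0 ≤ ∑ x, Real.negMulLog (p x) := by
  refine Finset.sum_nonneg fun x _ => Real.negMulLog_nonneg (h0 x) ?_
  calc p x ≤ ∑ y, p y := Finset.single_le_sum (fun y _ => h0 y) (Finset.mem_univ x)
    _ = 1 := h1

private lemma entropy_unique {γ : Type} [Fintype γ] [Unique γ] (p : γ → ℝ)
    (h1 : ∑ x, p x = 1) : ∑ x, Real.negMulLog (p x) = 0 := by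
  rw [Fintype.sum_unique] at h1 ⊢
  rw [h1, Real.negMulLog_one]

private lemma sum_cons_split {α : Type} [Fintype α] {n : ℕ} (g : (Fin (n+1) → α) → ℝ) :
    ∑ x, g x = ∑ a, ∑ x : Fin n → α, g (Fin.cons a x) := by
  rw [← Equiv.sum_comp (Fin.consEquiv fun _ => α) g, Fintype.sum_prod_type]
  rfl

private lemma sum_prod_fn {β : Type} [Fintype β] :
    ∀ (n : ℕ) (g : Fin n → β → ℝ),
      ∑ y : Fin n → β, ∏ i, g i (y i) = ∏ i, ∑ b, g i b := by
  intro n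
  induction n with
  | zero =>
    intro g
    rw [Fintype.sum_unique]
    simp
  | succ m ih =>
    intro g
    rw [sum_cons_split (fun y => ∏ i, g i (y i)), Fin.prod_univ_succ]
    have : ∀ b : β, ∑ y : Fin m → β, ∏ i : Fin (m+1), g i ((Fin.cons b y : Fin (m+1) → β) i)
        = g 0 b * ∏ i : Fin m, ∑ c, g i.succ c := by
      intro b
      rw [← ih (fun i => g i.succ), Finset.mul_sum]
      refine Finset.sum_congr rfl fun y _ => ?_
      rw [Fin.prod_univ_succ]
      simp [Fin.cons_zero, Fin.cons_succ]
    simp only [this]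
    rw [← Finset.sum_mul]

/-- concavity of entropy (pointwise Jensen summed). -/
private lemma mixture_entropy_ge {ι γ : Type} [Fintype ι] [Fintype γ]
    (w : ι → ℝ) (hw0 : ∀ i, 0 ≤ w i) (hw1 : ∑ i, w i = 1)
    (s : ι → γ → ℝ) (hs0 : ∀ i y, 0 ≤ s i y) :
    ∑ i, w i * (∑ y, Real.negMulLog (s i y)) ≤
      ∑ y, Real.negMulLog (∑ i, w i * s i y) := by
  have key : ∀ y : γ, ∑ i, w i * Real.negMulLog (s i y) ≤
      Real.negMulLog (∑ i, w i * s i y) := by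
    intro y
    have := Real.concaveOn_negMulLog.le_map_sum (t := Finset.univ) (w := w)
      (p := fun i => s i y) (fun i _ => hw0 i) hw1 (fun i _ => hs0 i y)
    simpa [smul_eq_mul] using this
  calc ∑ i, w i * (∑ y, Real.negMulLog (s i y))
      = ∑ y, ∑ i, w i * Real.negMulLog (s i y) := by
        rw [Finset.sum_comm]
        exact Finset.sum_congr rfl fun i _ => Finset.mul_sum _ _ _
    _ ≤ ∑ y, Real.negMulLog (∑ i, w i * s i y) :=
        Finset.sum_le_sum fun y _ => key y

private lemma scaled_mixture {ι γ : Type} [Fintype ι] [Fintype γ]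
    (v : ι → ℝ) (hv0 : ∀ i, 0 ≤ v i)
    (s : ι → γ → ℝ) (hs0 : ∀ i y, 0 ≤ s i y) (hs1 : ∀ i, ∑ y, s i y = 1) :
    ∑ i, v i * (∑ y, Real.negMulLog (s i y)) + Real.negMulLog (∑ i, v i) ≤
      ∑ y, Real.negMulLog (∑ i, v i * s i y) := by
  rcases eq_or_lt_of_le (Finset.sum_nonneg (s := Finset.univ) fun i _ => hv0 i) with h0 | hpos
  · have hvz : ∀ i, v i = 0 := by
      intro i
      exact (Finset.sum_eq_zero_iff_of_nonneg fun j _ => hv0 j).mp h0.symm i (Finset.mem_univ i)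
    simp [hvz]
  · set c := ∑ i, v i with hc
    set u := fun i => v i / c with hu
    have hu0 : ∀ i, 0 ≤ u i := fun i => div_nonneg (hv0 i) hpos.le
    have hu1 : ∑ i, u i = 1 := by
      rw [hu, ← Finset.sum_div, ← hc, div_self hpos.ne']
    have hvc : ∀ i, v i = c * u i := by
      intro i; rw [hu]; field_simp
    set m := fun y => ∑ i, u i * s i y with hm
    have hm0 : ∀ y, 0 ≤ m y := fun y =>
      Finset.sum_nonneg fun i _ => mul_nonneg (hu0 i) (hs0 i y)
    have hm1 : ∑ y, m y = 1 := by
      rw [hm]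
      dsimp only
      rw [Finset.sum_comm]
      calc ∑ i, ∑ y, u i * s i y = ∑ i, u i * ∑ y, s i y := by
            exact Finset.sum_congr rfl fun i _ => (Finset.mul_sum _ _ _).symm
        _ = 1 := by simp only [hs1, mul_one]; exact hu1
    have key := mixture_entropy_ge u hu0 hu1 s hs0
    have expand : ∀ y, Real.negMulLog (∑ i, v i * s i y)
        = m y * Real.negMulLog c + c * Real.negMulLog (m y) := by
      intro y
      have : ∑ i, v i * s i y = c * m y := by
        rw [hm, Finset.mul_sum]
        exact Finset.sum_congr rfl fun i _ => by rw [hvc i]; ring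
      rw [this, Real.negMulLog_mul]
    calc ∑ i, v i * (∑ y, Real.negMulLog (s i y)) + Real.negMulLog c
        = c * (∑ i, u i * (∑ y, Real.negMulLog (s i y))) + Real.negMulLog c := by
          rw [Finset.mul_sum]
          congr 1
          exact Finset.sum_congr rfl fun i _ => by rw [hvc i]; ring
      _ ≤ c * (∑ y, Real.negMulLog (m y)) + Real.negMulLog c := by
          have := mul_le_mul_of_nonneg_left key hpos.le
          linarith
      _ = ∑ y, (m y * Real.negMulLog c + c * Real.negMulLog (m y)) := by
          rw [Finset.sum_add_distrib, ← Finset.sum_mul, hm1, one_mul, ← Finset.mul_sum]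
          ring
      _ = ∑ y, Real.negMulLog (∑ i, v i * s i y) := by
          exact (Finset.sum_congr rfl fun y _ => (expand y).symm)

private lemma superadd {ι γ δ : Type} [Fintype ι] [Fintype γ] [Fintype δ]
    (w : ι → ℝ) (hw0 : ∀ i, 0 ≤ w i)
    (t : ι → δ → ℝ) (ht0 : ∀ i b, 0 ≤ t i b) (ht1 : ∀ i, ∑ b, t i b = 1)
    (s : ι → γ → ℝ) (hs0 : ∀ i y, 0 ≤ s i y) (hs1 : ∀ i, ∑ y, s i y = 1) :
    (∑ i, w i * (∑ y, Real.negMulLog (s i y))) + ∑ b, Real.negMulLog (∑ i, w i * t i b) ≤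
      ∑ b, ∑ y, Real.negMulLog (∑ i, w i * t i b * s i y) := by
  have hb : ∀ b : δ,
      ∑ i, (w i * t i b) * (∑ y, Real.negMulLog (s i y)) + Real.negMulLog (∑ i, w i * t i b) ≤
        ∑ y, Real.negMulLog (∑ i, w i * t i b * s i y) :=
    fun b => scaled_mixture (fun i => w i * t i b)
      (fun i => mul_nonneg (hw0 i) (ht0 i b)) s hs0 hs1
  have hsum := Finset.sum_le_sum (s := Finset.univ) fun b _ => hb b
  rw [Finset.sum_add_distrib] at hsum
  refine le_trans (le_of_eq ?_) hsum
  congr 1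
  rw [Finset.sum_comm]
  refine Finset.sum_congr rfl fun i _ => ?_
  rw [← Finset.sum_mul, ← Finset.mul_sum, ht1, mul_one]

private lemma comb_step (f : ℝ → ℝ) (hconv : ConvexOn ℝ (Set.Ici 0) f)
    (n : ℕ) (A B : ℝ) (hA : 0 ≤ A) (hB : 0 ≤ B) (hA0 : n = 0 → A = 0) :
    ((n : ℝ) + 1) * f ((A + B) / ((n : ℝ) + 1)) ≤ (n : ℝ) * f (A / n) + f B := by
  rcases Nat.eq_zero_or_pos n with h | h
  · subst h
    rw [hA0 rfl]
    norm_num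
  · have hn : (0:ℝ) < n := by exact_mod_cast h
    have hn1 : (0:ℝ) < (n:ℝ) + 1 := by linarith
    have hw1 : (0:ℝ) ≤ (n:ℝ)/((n:ℝ)+1) := by positivity
    have hw2 : (0:ℝ) ≤ 1/((n:ℝ)+1) := by positivity
    have hw : (n:ℝ)/((n:ℝ)+1) + 1/((n:ℝ)+1) = 1 := by field_simp
    have hx : A / (n:ℝ) ∈ Set.Ici (0:ℝ) := by
      simp only [Set.mem_Ici]; positivity
    have hy : B ∈ Set.Ici (0:ℝ) := hB
    have hj := hconv.2 hx hy hw1 hw2 hw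
    have heq : ((n:ℝ)/((n:ℝ)+1)) • (A/(n:ℝ)) + (1/((n:ℝ)+1)) • B = (A + B)/((n:ℝ)+1) := by
      simp only [smul_eq_mul]
      field_simp
    rw [heq] at hj
    have := mul_le_mul_of_nonneg_left hj hn1.le
    calc ((n:ℝ)+1) * f ((A+B)/((n:ℝ)+1))
        ≤ ((n:ℝ)+1) * (((n:ℝ)/((n:ℝ)+1)) • f (A/(n:ℝ)) + (1/((n:ℝ)+1)) • f B) := this
      _ = (n:ℝ) * f (A/(n:ℝ)) + f B := by
          simp only [smul_eq_mul]
          field_simp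

theorem classical_channel_output_entropy_bound
    {α β : Type} [Fintype α] [Fintype β]
    (Φ : α → β → ℝ) (hΦ0 : ∀ a b, 0 ≤ Φ a b) (hΦ1 : ∀ a, ∑ b, Φ a b = 1)
    (f : ℝ → ℝ) (hf0 : ∀ x, 0 ≤ x → 0 ≤ f x)
    (hmono : MonotoneOn f (Set.Ici 0)) (hconv : ConvexOn ℝ (Set.Ici 0) f)
    (hf : ∀ p : α → ℝ, (∀ a, 0 ≤ p a) → ∑ a, p a = 1 →
      f (-∑ a, p a * Real.log (p a)) ≤
        -∑ b, (∑ a, p a * Φ a b) * Real.log (∑ a, p a * Φ a b)) :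
    ∀ n : ℕ, 0 < n → ∀ p : (Fin n → α) → ℝ, (∀ x, 0 ≤ p x) → ∑ x, p x = 1 →
      (n : ℝ) * f ((-∑ x, p x * Real.log (p x)) / n) ≤
        -∑ y : Fin n → β,
          (∑ x, p x * ∏ i, Φ (x i) (y i)) * Real.log (∑ x, p x * ∏ i, Φ (x i) (y i)) := by
  -- restate with negMulLog
  suffices H : ∀ n : ℕ, ∀ p : (Fin n → α) → ℝ, (∀ x, 0 ≤ p x) → ∑ x, p x = 1 →
      (n : ℝ) * f ((∑ x, Real.negMulLog (p x)) / n) ≤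
        ∑ y : Fin n → β, Real.negMulLog (∑ x, p x * ∏ i, Φ (x i) (y i)) by
    intro n _ p hp0 hp1
    rw [neg_sum_mul_log_eq, neg_sum_mul_log_eq]
    exact H n p hp0 hp1
  have hf' : ∀ p : α → ℝ, (∀ a, 0 ≤ p a) → ∑ a, p a = 1 →
      f (∑ a, Real.negMulLog (p a)) ≤ ∑ b, Real.negMulLog (∑ a, p a * Φ a b) := by
    intro p hp0 hp1
    have := hf p hp0 hp1
    rwa [neg_sum_mul_log_eq, neg_sum_mul_log_eq] at this
  intro n
  induction n with
  | zero =>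
    intro p hp0 hp1
    simp only [Nat.cast_zero, zero_mul]
    have : ∀ y : Fin 0 → β, (∑ x, p x * ∏ i, Φ (x i) (y i)) = 1 := by
      intro y
      simp only [Fin.prod_univ_zero, mul_one]
      exact hp1
    rw [Fintype.sum_unique]
    rw [this]
    simp
  | succ n ih =>
    intro p hp0 hp1
    -- marginal on the first coordinate
    set P : α → ℝ := fun a => ∑ x : Fin n → α, p (Fin.cons a x) with hPdef
    have hP0 : ∀ a, 0 ≤ P a := fun a => Finset.sum_nonneg fun x _ => hp0 _
    have hP1 : ∑ a, P a = 1 := by rw [← sum_cons_split p] ; exact hp1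
    -- nonemptiness of Fin n → α
    have hne : Nonempty α := by
      by_contra h
      haveI : IsEmpty α := not_nonempty_iff.mp h
      haveI : IsEmpty (Fin (n+1) → α) := ⟨fun x => IsEmpty.false (x 0)⟩
      rw [Finset.univ_eq_empty, Finset.sum_empty] at hp1
      exact one_ne_zero hp1.symm
    haveI : Nonempty (Fin n → α) := inferInstance
    have hcard : (0:ℝ) < (Fintype.card (Fin n → α) : ℝ) := by
      exact_mod_cast Fintype.card_pos
    -- conditional distributions
    set q : α → (Fin n → α) → ℝ := fun a x =>
      if P a = 0 then (Fintype.card (Fin n → α) : ℝ)⁻¹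
      else p (Fin.cons a x) / P a with hqdef
    have hqx : ∀ a x, q a x = if P a = 0 then (Fintype.card (Fin n → α) : ℝ)⁻¹
        else p (Fin.cons a x) / P a := fun a x => rfl
    have hPa : ∀ a, P a = ∑ x : Fin n → α, p (Fin.cons a x) := fun a => rfl
    have hq0 : ∀ a x, 0 ≤ q a x := by
      intro a x
      rw [hqx]
      split_ifs with h
      · positivity
      · exact div_nonneg (hp0 _) (hP0 a)
    have hq1 : ∀ a, ∑ x, q a x = 1 := by
      intro a
      by_cases h : P a = 0
      · simp only [hqx, if_pos h]
        rw [Finset.sum_const, Finset.card_univ, nsmul_eq_mul]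
        field_simp
      · simp only [hqx, if_neg h]
        rw [← Finset.sum_div, ← hPa, div_self h]
    have hqp : ∀ a x, p (Fin.cons a x) = P a * q a x := by
      intro a x
      by_cases h : P a = 0
      · have hz : p (Fin.cons a x) = 0 := by
          have h' : ∑ y : Fin n → α, p (Fin.cons a y) = 0 := by rw [← hPa]; exact h
          exact (Finset.sum_eq_zero_iff_of_nonneg
            (fun y (_ : y ∈ Finset.univ) => hp0 (Fin.cons a y))).mp h' x (Finset.mem_univ x)
        rw [hz, h, zero_mul]
      · rw [hqx, if_neg h]
        field_simp
    -- chain rule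
    have chain : ∑ x, Real.negMulLog (p x)
        = (∑ a, Real.negMulLog (P a)) + ∑ a, P a * (∑ x, Real.negMulLog (q a x)) := by
      rw [sum_cons_split (fun x => Real.negMulLog (p x)), ← Finset.sum_add_distrib]
      refine Finset.sum_congr rfl fun a _ => ?_
      calc ∑ x : Fin n → α, Real.negMulLog (p (Fin.cons a x))
          = ∑ x : Fin n → α, (q a x * Real.negMulLog (P a) + P a * Real.negMulLog (q a x)) := by
            refine Finset.sum_congr rfl fun x _ => ?_
            rw [hqp a x, Real.negMulLog_mul]
        _ = Real.negMulLog (P a) + P a * ∑ x, Real.negMulLog (q a x) := by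
            rw [Finset.sum_add_distrib, ← Finset.sum_mul, hq1 a, one_mul, ← Finset.mul_sum]
    -- output of conditional distributions
    set s : α → (Fin n → β) → ℝ :=
      fun a y => ∑ x : Fin n → α, q a x * ∏ i, Φ (x i) (y i) with hsdef
    have hs0 : ∀ a y, 0 ≤ s a y := fun a y =>
      Finset.sum_nonneg fun x _ => mul_nonneg (hq0 a x)
        (Finset.prod_nonneg fun i _ => hΦ0 _ _)
    have hs1 : ∀ a, ∑ y, s a y = 1 := by
      intro a
      rw [hsdef]
      dsimp only
      rw [Finset.sum_comm]
      calc ∑ x : Fin n → α, ∑ y : Fin n → β, q a x * ∏ i, Φ (x i) (y i)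
          = ∑ x : Fin n → α, q a x * ∑ y : Fin n → β, ∏ i, Φ (x i) (y i) := by
            exact Finset.sum_congr rfl fun x _ => (Finset.mul_sum _ _ _).symm
        _ = ∑ x : Fin n → α, q a x := by
            refine Finset.sum_congr rfl fun x _ => ?_
            rw [sum_prod_fn n (fun i => Φ (x i))]
            simp only [hΦ1, Finset.prod_const_one, mul_one]
        _ = 1 := hq1 a
    -- output decomposition
    have out_eq : ∀ (b : β) (y : Fin n → β),
        (∑ x : Fin (n+1) → α, p x * ∏ i, Φ (x i) ((Fin.cons b y : Fin (n+1) → β) i))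
          = ∑ a, P a * Φ a b * s a y := by
      intro b y
      rw [sum_cons_split (fun x => p x * ∏ i, Φ (x i) ((Fin.cons b y : Fin (n+1) → β) i))]
      refine Finset.sum_congr rfl fun a _ => ?_
      rw [hsdef]
      dsimp only
      rw [Finset.mul_sum]
      refine Finset.sum_congr rfl fun x _ => ?_
      rw [hqp a x, Fin.prod_univ_succ]
      simp only [Fin.cons_zero, Fin.cons_succ]
      ring
    -- apply superadditivity
    have key := superadd P hP0 Φ hΦ0 hΦ1 s hs0 hs1
    -- rewrite RHS of the goal
    have rhs_eq : ∑ y : Fin (n+1) → β, Real.negMulLog (∑ x, p x * ∏ i, Φ (x i) (y i))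
        = ∑ b, ∑ y : Fin n → β, Real.negMulLog (∑ a, P a * Φ a b * s a y) := by
      rw [sum_cons_split (fun y => Real.negMulLog (∑ x, p x * ∏ i, Φ (x i) (y i)))]
      refine Finset.sum_congr rfl fun b _ => Finset.sum_congr rfl fun y _ => ?_
      rw [out_eq b y]
    -- entropies nonneg
    have hHq : ∀ a, 0 ≤ ∑ x, Real.negMulLog (q a x) :=
      fun a => entropy_nonneg' (q a) (hq0 a) (hq1 a)
    have hHP : 0 ≤ ∑ a, Real.negMulLog (P a) := entropy_nonneg' P hP0 hP1
    set A := ∑ a, P a * (∑ x, Real.negMulLog (q a x)) with hAdef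
    set B := ∑ a, Real.negMulLog (P a) with hBdef
    have hA : 0 ≤ A := Finset.sum_nonneg fun a _ => mul_nonneg (hP0 a) (hHq a)
    have hA0 : n = 0 → A = 0 := by
      intro hn0
      haveI : IsEmpty (Fin n) := by rw [hn0]; infer_instance
      haveI : Unique (Fin n → α) := Pi.uniqueOfIsEmpty _
      rw [hAdef]
      refine Finset.sum_eq_zero fun a _ => ?_
      rw [entropy_unique (q a) (hq1 a), mul_zero]
    -- Jensen step: ∑ P a * (n * f(Hq a / n)) ≥ n * f(A/n)
    have jensen : (n:ℝ) * f (A / n) ≤ ∑ a, P a * ((n:ℝ) * f ((∑ x, Real.negMulLog (q a x)) / n)) := by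
      rcases Nat.eq_zero_or_pos n with h | h
      · subst h
        simp only [Nat.cast_zero, zero_mul, mul_zero, Finset.sum_const_zero]
        exact le_refl 0
      · have hn : (0:ℝ) < n := by exact_mod_cast h
        have hj := hconv.map_sum_le (t := Finset.univ) (w := P)
          (p := fun a => (∑ x, Real.negMulLog (q a x)) / n)
          (fun a _ => hP0 a) hP1
          (fun a _ => Set.mem_Ici.mpr (div_nonneg (hHq a) (Nat.cast_nonneg n)))
        simp only [smul_eq_mul] at hj
        have harg : ∑ a, P a * ((∑ x, Real.negMulLog (q a x)) / (n:ℝ)) = A / n := by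
          rw [hAdef, Finset.sum_div]
          exact Finset.sum_congr rfl fun a _ => (mul_div_assoc _ _ _).symm
        rw [harg] at hj
        calc (n:ℝ) * f (A / n) ≤ (n:ℝ) * ∑ a, P a * f ((∑ x, Real.negMulLog (q a x)) / n) :=
              mul_le_mul_of_nonneg_left hj hn.le
          _ = ∑ a, P a * ((n:ℝ) * f ((∑ x, Real.negMulLog (q a x)) / n)) := by
              rw [Finset.mul_sum]
              exact Finset.sum_congr rfl fun a _ => by ring
    -- IH applied to each q a, weighted
    have ih_w : ∑ a, P a * ((n:ℝ) * f ((∑ x, Real.negMulLog (q a x)) / n))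
        ≤ ∑ a, P a * (∑ y, Real.negMulLog (s a y)) := by
      refine Finset.sum_le_sum fun a _ => ?_
      exact mul_le_mul_of_nonneg_left (ih (q a) (hq0 a) (hq1 a)) (hP0 a)
    -- channel bound for marginal
    have hfP := hf' P hP0 hP1
    -- combine
    rw [chain, rhs_eq]
    have final : ((n:ℝ)+1) * f ((A + B)/((n:ℝ)+1)) ≤ (n:ℝ) * f (A/n) + f B :=
      comb_step f hconv n A B hA hHP hA0
    have hcast : ((n:ℕ) + 1 : ℕ) = ((n:ℝ)+1 : ℝ) := by push_cast; ring
    calc ((n+1 : ℕ) : ℝ) * f ((B + A) / ((n+1 : ℕ) : ℝ))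
        = ((n:ℝ)+1) * f ((A + B)/((n:ℝ)+1)) := by push_cast; rw [add_comm B A]
      _ ≤ (n:ℝ) * f (A/n) + f B := final
      _ ≤ (∑ a, P a * (∑ y, Real.negMulLog (s a y))) + ∑ b, Real.negMulLog (∑ a, P a * Φ a b) := by
          have h1 := jensen.trans ih_w
          rw [hBdef]
          exact add_le_add h1 hfP
      _ ≤ ∑ b, ∑ y, Real.negMulLog (∑ a, P a * Φ a b * s a y) := key
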